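/- arXiv:1806.10074 — 6 statements merged into one kernel-verified Lean document; each statement's English description precedes it below -/
import Mathlib

section
/- Let Ω ⊆ ℝ² be a compact set, ρ a natural number, and P_1, …, P_ρ ⊆ ℝ² nonempty compact sets. Then the set of suitable solutions Γ = {(q_1, …, q_ρ) ∈ (ℝ²)^ρ : q_i + P_i ⊆ Ω for every i, and interior(q_i + P_i) ∩ interior(q_j + P_j) = ∅ for all i ≠ j} is a compact subset of (ℝ²)^ρ. -/
open Set Pointwise

/-- For a compact `Ω ⊆ ℝ²` and nonempty compact sets `P_1, …, P_ρ ⊆ ℝ²`,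
the set of suitable solutions
`Γ = {(q_1, …, q_ρ) | q_i + P_i ⊆ Ω for all i, and
      interior (q_i + P_i) ∩ interior (q_j + P_j) = ∅ for all i ≠ j}`
is a compact subset of `(ℝ²)^ρ`. -/
theorem suitable_solutions_compact
    (Ω : Set (EuclideanSpace ℝ (Fin 2))) (hΩ : IsCompact Ω)
    (ρ : ℕ) (P : Fin ρ → Set (EuclideanSpace ℝ (Fin 2)))
    (hPc : ∀ i, IsCompact (P i)) (hPne : ∀ i, (P i).Nonempty) :
    IsCompact {q : Fin ρ → EuclideanSpace ℝ (Fin 2) |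
      (∀ i, (fun p => q i + p) '' P i ⊆ Ω) ∧
      ∀ i j, i ≠ j →
        interior ((fun p => q i + p) '' P i) ∩
          interior ((fun p => q j + p) '' P j) = ∅} := by
  classical
  choose p₀ hp₀ using hPne
  have hKc : IsCompact (Set.pi univ fun i => (fun x => x - p₀ i) '' Ω) :=
    isCompact_univ_pi fun i => hΩ.image (continuous_sub_right (p₀ i))
  apply IsCompact.of_isClosed_subset hKc
  · -- closedness
    have h1 : IsClosed {q : Fin ρ → EuclideanSpace ℝ (Fin 2) |
        ∀ i, (fun p => q i + p) '' P i ⊆ Ω} := by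
      have he : {q : Fin ρ → EuclideanSpace ℝ (Fin 2) | ∀ i, (fun p => q i + p) '' P i ⊆ Ω}
          = ⋂ i, ⋂ p ∈ P i, {q : Fin ρ → EuclideanSpace ℝ (Fin 2) | q i + p ∈ Ω} := by
        ext q
        simp only [mem_setOf_eq, mem_iInter]
        exact forall_congr' fun i => image_subset_iff
      rw [he]
      refine isClosed_iInter fun i => isClosed_iInter fun p => isClosed_iInter fun _ => ?_
      exact hΩ.isClosed.preimage ((continuous_apply i).add continuous_const)
    have h2 : IsClosed {q : Fin ρ → EuclideanSpace ℝ (Fin 2) | ∀ i j, i ≠ j →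
        interior ((fun p => q i + p) '' P i) ∩
          interior ((fun p => q j + p) '' P j) = ∅} := by
      have hint : ∀ (v : EuclideanSpace ℝ (Fin 2)) (S : Set (EuclideanSpace ℝ (Fin 2))),
          interior ((fun p => v + p) '' S) = (fun p => v + p) '' interior S := by
        intro v S
        exact ((Homeomorph.addLeft v).image_interior S).symm
      have he : {q : Fin ρ → EuclideanSpace ℝ (Fin 2) | ∀ i j, i ≠ j →
            interior ((fun p => q i + p) '' P i) ∩
              interior ((fun p => q j + p) '' P j) = ∅}
          = ⋂ i, ⋂ j, ⋂ (_ : i ≠ j),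
              (fun q : Fin ρ → EuclideanSpace ℝ (Fin 2) => q j - q i) ⁻¹'
                (interior (P i) - interior (P j))ᶜ := by
        ext q
        simp only [mem_setOf_eq, mem_iInter, mem_preimage, mem_compl_iff]
        refine forall_congr' fun i => forall_congr' fun j => imp_congr_right fun _ => ?_
        rw [hint, hint, eq_empty_iff_forall_notMem]
        constructor
        · intro h hmem
          rcases mem_sub.mp hmem with ⟨a, ha, b, hb, hab⟩
          refine h (q i + a) ⟨⟨a, ha, rfl⟩, ⟨b, hb, ?_⟩⟩
          show q j + b = q i + a
          have h' : a + q i = q j + b := sub_eq_sub_iff_add_eq_add.mp hab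
          exact ((h'.symm.trans (add_comm a (q i))).symm).symm
        · rintro h x ⟨⟨a, ha, rfl⟩, ⟨b, hb, hba⟩⟩
          refine h (mem_sub.mpr ⟨a, ha, b, hb, ?_⟩)
          have hba' : q j + b = q i + a := hba
          exact sub_eq_sub_iff_add_eq_add.mpr (by rw [add_comm]; exact hba'.symm)
      rw [he]
      refine isClosed_iInter fun i => isClosed_iInter fun j => isClosed_iInter fun _ => ?_
      have hopen : IsOpen (interior (P i) - interior (P j)) :=
        IsOpen.sub_right isOpen_interior
      exact (hopen.isClosed_compl).preimage ((continuous_apply j).sub (continuous_apply i))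
    exact h1.inter h2
  · -- subset
    rintro q ⟨hq1, -⟩ i -
    exact ⟨q i + p₀ i, hq1 i ⟨p₀ i, hp₀ i, rfl⟩, add_sub_cancel_right _ _⟩
end

section
/- Let Ω' ⊆ ℝ² be a compact measurable set, let D : ℝ² → ℝ be a nonnegative integrable function, and let μ be the measure with density D with respect to the Lebesgue measure. Let c_1, …, c_ρ : ℝ² → ℝ be continuous functions such that for all i ≠ j the set {q ∈ Ω' : c_i(q) = c_j(q)} is μ-negligible. Define A_i = {q ∈ Ω' : c_i(q) < c_j(q) for all j ≠ i}. If B_1, …, B_ρ are pairwise disjoint measurable subsets of Ω' with μ(Ω' \ (B_1 ∪ … ∪ B_ρ)) = 0 and ∑_{i=1}^ρ ∫_{B_i} c_i dμ = ∑_{i=1}^ρ ∫_{A_i} c_i dμ, then μ(A_i Δ B_i) = 0 for every i, i.e., the minimizing partition is unique up to μ-negligible sets. -/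
open Set MeasureTheory

/-- uniqueness of the minimizing partition for the lower-level
allocation problem LL(Q). Under the same hypotheses as the optimality statement,
any measurable partition `B` of `Ω'` (up to `μ`-negligible sets) whose total cost
equals that of the strict-minimum partition `A` coincides with `A` up to
`μ`-negligible sets: `μ (A_i Δ B_i) = 0` for every `i`. -/
theorem strict_min_partition_unique
    (Ω' : Set (EuclideanSpace ℝ (Fin 2))) (hΩc : IsCompact Ω')
    (hΩm : MeasurableSet Ω')
    (D : EuclideanSpace ℝ (Fin 2) → ℝ) (hD0 : ∀ q, 0 ≤ D q) (hDint : Integrable D)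
    (μ : Measure (EuclideanSpace ℝ (Fin 2)))
    (hμ : μ = volume.withDensity (fun q => ENNReal.ofReal (D q)))
    (ρ : ℕ) (c : Fin ρ → EuclideanSpace ℝ (Fin 2) → ℝ)
    (hc : ∀ i, Continuous (c i))
    (hties : ∀ i j, i ≠ j → μ {q ∈ Ω' | c i q = c j q} = 0)
    (A : Fin ρ → Set (EuclideanSpace ℝ (Fin 2)))
    (hA : ∀ i, A i = {q ∈ Ω' | ∀ j, j ≠ i → c i q < c j q})
    (B : Fin ρ → Set (EuclideanSpace ℝ (Fin 2)))
    (hBm : ∀ i, MeasurableSet (B i)) (hBsub : ∀ i, B i ⊆ Ω')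
    (hBdisj : ∀ i j, i ≠ j → Disjoint (B i) (B j))
    (hBcover : μ (Ω' \ ⋃ i, B i) = 0)
    (hEq : ∑ i, ∫ q in B i, c i q ∂μ = ∑ i, ∫ q in A i, c i q ∂μ) :
    ∀ i, μ (symmDiff (A i) (B i)) = 0 := by
  intro i0
  haveI : Nonempty (Fin ρ) := ⟨i0⟩
  haveI : IsFiniteMeasure μ := by
    constructor
    rw [hμ, withDensity_apply _ MeasurableSet.univ, Measure.restrict_univ]
    exact hDint.lintegral_lt_top
  -- basic facts about A
  have hAm : ∀ j, MeasurableSet (A j) := by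
    intro j
    rw [hA]
    have : {q ∈ Ω' | ∀ k, k ≠ j → c j q < c k q}
        = Ω' ∩ ⋂ k, ⋂ (_ : k ≠ j), {q | c j q < c k q} := by
      ext q; simp [Set.mem_iInter, Set.mem_setOf_eq]
    rw [this]
    exact hΩm.inter (MeasurableSet.iInter fun k => MeasurableSet.iInter fun _ =>
      measurableSet_lt (hc j).measurable (hc k).measurable)
  have hAsub : ∀ j, A j ⊆ Ω' := by
    intro j; rw [hA]; exact fun q hq => hq.1
  have hAdisj : ∀ j k, j ≠ k → Disjoint (A j) (A k) := by
    intro j k hjk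
    rw [Set.disjoint_left]
    intro q hqj hqk
    rw [hA] at hqj hqk
    exact lt_asymm (hqj.2 k (Ne.symm hjk)) (hqk.2 j hjk)
  -- A covers Ω' up to a null set
  have hAcover : μ (Ω' \ ⋃ j, A j) = 0 := by
    have hsub : Ω' \ ⋃ j, A j ⊆ ⋃ (j) (k) (_ : j ≠ k), {q ∈ Ω' | c j q = c k q} := by
      intro q hq
      obtain ⟨hqΩ, hqA⟩ := hq
      obtain ⟨j, -, hj⟩ := Finset.exists_mem_eq_inf' (Finset.univ_nonempty (α := Fin ρ))
        (fun k => c k q)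
      have hnot : ¬ (∀ k, k ≠ j → c j q < c k q) := by
        intro h
        exact hqA (Set.mem_iUnion.mpr ⟨j, by rw [hA]; exact ⟨hqΩ, h⟩⟩)
      push_neg at hnot
      obtain ⟨k, hkj, hk⟩ := hnot
      have hle : c j q ≤ c k q := by
        rw [← hj]; exact Finset.inf'_le _ (Finset.mem_univ k)
      simp only [Set.mem_iUnion]
      exact ⟨j, k, Ne.symm hkj, ⟨hqΩ, le_antisymm hle hk⟩⟩
    refine measure_mono_null hsub ?_
    refine measure_iUnion_null fun j => measure_iUnion_null fun k => measure_iUnion_null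
      fun h => hties j k h
  -- integrability of each c j on subsets of Ω'
  have hint : ∀ (j : Fin ρ) (s : Set (EuclideanSpace ℝ (Fin 2))), s ⊆ Ω' →
      IntegrableOn (c j) s μ := by
    intro j s hs
    exact (((hc j).continuousOn).integrableOn_compact hΩc).mono_set hs
  -- decomposition of set integrals along an a.e. partition of Ω'
  have hdecomp : ∀ (f : EuclideanSpace ℝ (Fin 2) → ℝ) (t : Set (EuclideanSpace ℝ (Fin 2)))
      (C : Fin ρ → Set (EuclideanSpace ℝ (Fin 2))),
      MeasurableSet t → t ⊆ Ω' → IntegrableOn f Ω' μ →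
      (∀ j, MeasurableSet (C j)) → (∀ j k, j ≠ k → Disjoint (C j) (C k)) →
      μ (Ω' \ ⋃ j, C j) = 0 →
      ∫ q in t, f q ∂μ = ∑ j, ∫ q in t ∩ C j, f q ∂μ := by
    intro f t C htm hts hf hCm hCd hCnull
    have h1 : ∫ q in t, f q ∂μ = ∫ q in ⋃ j, t ∩ C j, f q ∂μ := by
      apply setIntegral_congr_set
      rw [Filter.eventuallyEq_set]
      have hnull : μ (t \ ⋃ j, t ∩ C j) = 0 := by
        refine measure_mono_null ?_ hCnull
        intro q hq
        refine ⟨hts hq.1, fun hq2 => hq.2 ?_⟩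
        obtain ⟨j, hj⟩ := Set.mem_iUnion.mp hq2
        exact Set.mem_iUnion.mpr ⟨j, hq.1, hj⟩
      have := measure_eq_zero_iff_ae_notMem.mp hnull
      filter_upwards [this] with q hq
      constructor
      · intro hqt
        by_contra hqu
        exact hq ⟨hqt, hqu⟩
      · intro hqu
        obtain ⟨j, hj, -⟩ := Set.mem_iUnion.mp hqu
        exact hj
    rw [h1]
    exact integral_iUnion_fintype (fun j => htm.inter (hCm j))
      (fun j k hjk => ((hCd j k hjk).mono inter_subset_right inter_subset_right))
      (fun j => (hf.mono_set (fun q hq => hts hq.1)))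
  -- rewrite both sides of hEq as double sums
  have hBside : ∀ i, ∫ q in B i, c i q ∂μ = ∑ j, ∫ q in B i ∩ A j, c i q ∂μ :=
    fun i => hdecomp (c i) (B i) A (hBm i) (hBsub i) (hint i Ω' (subset_refl _))
      hAm hAdisj hAcover
  have hAside : ∀ j, ∫ q in A j, c j q ∂μ = ∑ i, ∫ q in B i ∩ A j, c j q ∂μ := by
    intro j
    rw [hdecomp (c j) (A j) B (hAm j) (hAsub j) (hint j Ω' (subset_refl _))
      hBm hBdisj hBcover]
    exact Finset.sum_congr rfl fun i _ => by rw [Set.inter_comm]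
  -- the double sum of nonnegative terms vanishes
  have hsum0 : ∑ i, ∑ j, ∫ q in B i ∩ A j, (c i q - c j q) ∂μ = 0 := by
    have hsplit : ∀ i j, ∫ q in B i ∩ A j, (c i q - c j q) ∂μ
        = (∫ q in B i ∩ A j, c i q ∂μ) - ∫ q in B i ∩ A j, c j q ∂μ := by
      intro i j
      exact integral_sub (hint i _ (fun q hq => hBsub i hq.1))
        (hint j _ (fun q hq => hBsub i hq.1))
    calc ∑ i, ∑ j, ∫ q in B i ∩ A j, (c i q - c j q) ∂μ
        = ∑ i, ∑ j, ((∫ q in B i ∩ A j, c i q ∂μ) - ∫ q in B i ∩ A j, c j q ∂μ) := by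
          exact Finset.sum_congr rfl fun i _ => Finset.sum_congr rfl fun j _ => hsplit i j
      _ = (∑ i, ∑ j, ∫ q in B i ∩ A j, c i q ∂μ)
          - ∑ i, ∑ j, ∫ q in B i ∩ A j, c j q ∂μ := by
          rw [← Finset.sum_sub_distrib]
          exact Finset.sum_congr rfl fun i _ => Finset.sum_sub_distrib _ _
      _ = (∑ i, ∫ q in B i, c i q ∂μ) - ∑ j, ∫ q in A j, c j q ∂μ := by
          have e1 : ∑ i, ∑ j, ∫ q in B i ∩ A j, c i q ∂μ
              = ∑ i, ∫ q in B i, c i q ∂μ :=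
            Finset.sum_congr rfl fun i _ => (hBside i).symm
          have e2 : (∑ i, ∑ j, ∫ q in B i ∩ A j, c j q ∂μ)
              = ∑ j, ∫ q in A j, c j q ∂μ := by
            rw [Finset.sum_comm]
            exact Finset.sum_congr rfl fun j _ => (hAside j).symm
          rw [e1, e2]
      _ = 0 := by rw [hEq, sub_self]
  have hterm0 : ∀ i j, ∫ q in B i ∩ A j, (c i q - c j q) ∂μ = 0 := by
    have hnn : ∀ i j, 0 ≤ ∫ q in B i ∩ A j, (c i q - c j q) ∂μ := by
      intro i j
      refine setIntegral_nonneg ((hBm i).inter (hAm j)) ?_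
      intro q hq
      rcases eq_or_ne i j with rfl | hij
      · simp
      · have := hq.2
        rw [hA] at this
        exact le_of_lt (sub_pos.mpr (this.2 i hij))
    intro i j
    have h1 : ∀ i, ∑ j, ∫ q in B i ∩ A j, (c i q - c j q) ∂μ = 0 := by
      have := (Finset.sum_eq_zero_iff_of_nonneg
        (fun i _ => Finset.sum_nonneg fun j _ => hnn i j)).mp hsum0
      exact fun i => this i (Finset.mem_univ i)
    have := (Finset.sum_eq_zero_iff_of_nonneg (fun j _ => hnn i j)).mp (h1 i)
    exact this j (Finset.mem_univ j)
  -- hence μ (B i ∩ A j) = 0 for i ≠ j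
  have hBA : ∀ i j, i ≠ j → μ (B i ∩ A j) = 0 := by
    intro i j hij
    set s := B i ∩ A j with hs
    have hsm : MeasurableSet s := (hBm i).inter (hAm j)
    have hintf : Integrable (fun q => c i q - c j q) (μ.restrict s) :=
      (hint i s (fun q hq => hBsub i hq.1)).sub (hint j s (fun q hq => hBsub i hq.1))
    have hnnae : 0 ≤ᵐ[μ.restrict s] fun q => c i q - c j q := by
      refine ae_restrict_of_forall_mem hsm ?_
      intro q hq
      have := hq.2
      rw [hA] at this
      exact le_of_lt (sub_pos.mpr (this.2 i hij))
    have hzero : (fun q => c i q - c j q) =ᵐ[μ.restrict s] 0 :=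
      (integral_eq_zero_iff_of_nonneg_ae hnnae hintf).mp (hterm0 i j)
    have hssub : s ⊆ {q | c i q - c j q ≠ 0} := by
      intro q hq
      have := hq.2
      rw [hA] at this
      exact ne_of_gt (sub_pos.mpr (this.2 i hij))
    have hnull : μ.restrict s {q | c i q - c j q ≠ 0} = 0 := by
      have h := hzero
      rw [Filter.EventuallyEq, ae_iff] at h
      simpa using h
    have hfin : μ.restrict s s = 0 := measure_mono_null hssub hnull
    rw [Measure.restrict_apply_self] at hfin
    exact hfin
  -- conclude
  have h1 : μ (A i0 \ B i0) = 0 := by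
    have hsub : A i0 \ B i0 ⊆ (Ω' \ ⋃ j, B j) ∪ ⋃ (j) (_ : j ≠ i0), B j ∩ A i0 := by
      intro q hq
      by_cases hqu : q ∈ ⋃ j, B j
      · obtain ⟨j, hj⟩ := Set.mem_iUnion.mp hqu
        have hji : j ≠ i0 := fun h => hq.2 (h ▸ hj)
        exact Or.inr (Set.mem_iUnion.mpr ⟨j, Set.mem_iUnion.mpr ⟨hji, hj, hq.1⟩⟩)
      · exact Or.inl ⟨hAsub i0 hq.1, hqu⟩
    refine measure_mono_null hsub (measure_union_null hBcover ?_)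
    exact measure_iUnion_null fun j => measure_iUnion_null fun hj => hBA j i0 hj
  have h2 : μ (B i0 \ A i0) = 0 := by
    have hsub : B i0 \ A i0 ⊆ (Ω' \ ⋃ j, A j) ∪ ⋃ (j) (_ : i0 ≠ j), B i0 ∩ A j := by
      intro q hq
      by_cases hqu : q ∈ ⋃ j, A j
      · obtain ⟨j, hj⟩ := Set.mem_iUnion.mp hqu
        have hji : i0 ≠ j := fun h => hq.2 (h ▸ hj)
        exact Or.inr (Set.mem_iUnion.mpr ⟨j, Set.mem_iUnion.mpr ⟨hji, hq.1, hj⟩⟩)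
      · exact Or.inl ⟨hBsub i0 hq.1, hqu⟩
    refine measure_mono_null hsub (measure_union_null hAcover ?_)
    exact measure_iUnion_null fun j => measure_iUnion_null fun hj => hBA i0 j hj
  rw [Set.symmDiff_def]
  exact measure_union_null h1 h2
end

section
/- Let D : ℝ² → ℝ be an integrable function, ρ a natural number, and P_1, …, P_ρ ⊆ ℝ² compact sets. Then the map (v_1, …, v_ρ) ↦ ∫_{(v_1 + P_1) ∪ … ∪ (v_ρ + P_ρ)} D(q) dq (integral with respect to the Lebesgue measure over the union of the translates) is continuous on (ℝ²)^ρ. -/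
open Set MeasureTheory Metric Filter Pointwise

/-- measure of the symm diff of a translated compact with itself, bounded by cthickenings. -/
lemma symmDiff_translate_le (K : Set (EuclideanSpace ℝ (Fin 2))) (hK : IsCompact K)
    (t : EuclideanSpace ℝ (Fin 2)) :
    volume (symmDiff (t +ᵥ K) K) ≤ 2 * (volume (cthickening ‖t‖ K) - volume K) := by
  have hKm : MeasurableSet K := hK.isClosed.measurableSet
  have hKfin : volume K ≠ ⊤ := hK.measure_lt_top.ne
  have hsub : ∀ s : EuclideanSpace ℝ (Fin 2), (s +ᵥ K) \ K ⊆ cthickening ‖s‖ K \ K := by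
    intro s x hx
    refine ⟨?_, hx.2⟩
    obtain ⟨k, hk, rfl⟩ := hx.1
    exact mem_cthickening_of_dist_le _ k _ _ hk (by simp [vadd_eq_add, dist_eq_norm])
  have hdiff : volume (cthickening ‖t‖ K \ K) = volume (cthickening ‖t‖ K) - volume K :=
    measure_diff (self_subset_cthickening K) hKm.nullMeasurableSet hKfin
  have h1 : volume ((t +ᵥ K) \ K) ≤ volume (cthickening ‖t‖ K) - volume K := by
    rw [← hdiff]; exact measure_mono (hsub t)
  have h2 : volume (K \ (t +ᵥ K)) ≤ volume (cthickening ‖t‖ K) - volume K := by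
    have hKe : K \ (t +ᵥ K) = t +ᵥ (((-t) +ᵥ K) \ K) := by
      rw [Set.vadd_set_sdiff, vadd_vadd]
      simp
    rw [hKe, measure_vadd]
    calc volume (((-t) +ᵥ K) \ K) ≤ volume (cthickening ‖(-t)‖ K \ K) :=
          measure_mono (hsub (-t))
      _ = volume (cthickening ‖t‖ K) - volume K := by rw [norm_neg, hdiff]
  calc volume (symmDiff (t +ᵥ K) K) ≤ volume ((t +ᵥ K) \ K) + volume (K \ (t +ᵥ K)) := by
        rw [Set.symmDiff_def]; exact measure_union_le _ _
    _ ≤ _ := by rw [two_mul]; exact add_le_add h1 h2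

lemma tendsto_cthickening_sub (K : Set (EuclideanSpace ℝ (Fin 2))) (hK : IsCompact K) :
    Tendsto (fun r : ℝ => volume (cthickening r K) - volume K) (nhds 0) (nhds 0) := by
  have hfin : ∃ R > 0, volume (cthickening R K) ≠ ⊤ :=
    ⟨1, one_pos, (hK.cthickening).measure_lt_top.ne⟩
  have h := tendsto_measure_cthickening (μ := volume) hfin
  rw [hK.isClosed.closure_eq] at h
  have := ENNReal.Tendsto.sub h ((tendsto_const_nhds : Filter.Tendsto _ (nhds (0:ℝ)) (nhds (volume K))))
    (Or.inr hK.measure_lt_top.ne)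
  rw [tsub_self] at this
  exact this

lemma symmDiff_iUnion_subset' {α ι : Type*} (s t : ι → Set α) :
    symmDiff (⋃ i, s i) (⋃ i, t i) ⊆ ⋃ i, symmDiff (s i) (t i) := by
  intro x hx
  rw [Set.mem_symmDiff] at hx
  simp only [Set.mem_iUnion] at hx ⊢
  rcases hx with ⟨⟨i, hi⟩, h2⟩ | ⟨⟨i, hi⟩, h2⟩ <;> push_neg at h2 <;>
    exact ⟨i, by rw [Set.mem_symmDiff]; tauto⟩

/-- for an integrable `D : ℝ² → ℝ` and compact sets `P_1, …, P_ρ ⊆ ℝ²`,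
the map `(v_1, …, v_ρ) ↦ ∫_{(v_1 + P_1) ∪ … ∪ (v_ρ + P_ρ)} D(q) dq` is continuous
on `(ℝ²)^ρ`. -/
theorem lost_demand_integral_continuous
    (D : EuclideanSpace ℝ (Fin 2) → ℝ) (hD : Integrable D)
    (ρ : ℕ) (P : Fin ρ → Set (EuclideanSpace ℝ (Fin 2)))
    (hP : ∀ i, IsCompact (P i)) :
    Continuous (fun v : Fin ρ → EuclideanSpace ℝ (Fin 2) =>
      ∫ q in ⋃ i, (fun p => v i + p) '' P i, D q) := by
  have himg : ∀ (a : EuclideanSpace ℝ (Fin 2)) (i : Fin ρ),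
      (fun p => a + p) '' P i = a +ᵥ P i := by
    intro a i
    simp only [← Set.image_vadd, vadd_eq_add]
  set A : (Fin ρ → EuclideanSpace ℝ (Fin 2)) → Set (EuclideanSpace ℝ (Fin 2)) :=
    fun v => ⋃ i, (fun p => v i + p) '' P i with hA
  have hAcompact : ∀ (v : Fin ρ → EuclideanSpace ℝ (Fin 2)) i,
      IsCompact ((fun p => v i + p) '' P i) :=
    fun v i => (hP i).image (continuous_add_left _)
  have hAm : ∀ v, MeasurableSet (A v) := fun v =>
    MeasurableSet.iUnion fun i => (hAcompact v i).isClosed.measurableSet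
  rw [continuous_iff_continuousAt]
  intro v₀
  -- Step 1: measure of symmetric difference tends to 0
  have hmeas : Tendsto (fun v => volume (symmDiff (A v) (A v₀))) (nhds v₀) (nhds 0) := by
    have hle : ∀ v, volume (symmDiff (A v) (A v₀)) ≤
        ∑ i : Fin ρ, 2 * (volume (cthickening ‖v i - v₀ i‖ (P i)) - volume (P i)) := by
      intro v
      calc volume (symmDiff (A v) (A v₀))
          ≤ volume (⋃ i, symmDiff ((fun p => v i + p) '' P i) ((fun p => v₀ i + p) '' P i)) :=
            measure_mono (symmDiff_iUnion_subset' _ _)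
        _ ≤ ∑ i : Fin ρ, volume (symmDiff ((fun p => v i + p) '' P i)
              ((fun p => v₀ i + p) '' P i)) := measure_iUnion_fintype_le _ _
        _ ≤ _ := by
            refine Finset.sum_le_sum fun i _ => ?_
            have key : symmDiff ((fun p => v i + p) '' P i) ((fun p => v₀ i + p) '' P i)
                = v₀ i +ᵥ symmDiff ((v i - v₀ i) +ᵥ P i) (P i) := by
              rw [himg, himg, Set.vadd_set_symmDiff, vadd_vadd]
              congr 2
              abel
            rw [key, measure_vadd]
            exact symmDiff_translate_le (P i) (hP i) _
    have hsum : Tendsto (fun v : Fin ρ → EuclideanSpace ℝ (Fin 2) =>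
        ∑ i : Fin ρ, 2 * (volume (cthickening ‖v i - v₀ i‖ (P i)) - volume (P i)))
        (nhds v₀) (nhds 0) := by
      have h0 : (0 : ENNReal) = ∑ _i : Fin ρ, 0 := by simp
      rw [h0]
      refine tendsto_finset_sum _ fun i _ => ?_
      have h1 : Tendsto (fun v : Fin ρ → EuclideanSpace ℝ (Fin 2) => ‖v i - v₀ i‖)
          (nhds v₀) (nhds 0) := by
        have hs : Tendsto (fun v : Fin ρ → EuclideanSpace ℝ (Fin 2) => v i - v₀ i)
            (nhds v₀) (nhds 0) := by
          have h4 := ((continuous_apply i).tendsto v₀).sub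
            (tendsto_const_nhds : Tendsto (fun _ : Fin ρ → EuclideanSpace ℝ (Fin 2) => v₀ i)
              (nhds v₀) (nhds (v₀ i)))
          simpa using h4
        simpa using hs.norm
      have h2 := (tendsto_cthickening_sub (P i) (hP i)).comp h1
      have h3 := ENNReal.Tendsto.const_mul (a := 2) h2 (Or.inr (by norm_num))
      simpa using h3
    exact tendsto_of_tendsto_of_tendsto_of_le_of_le tendsto_const_nhds hsum
      (fun v => zero_le) hle
  -- Step 2: lintegral of ‖D‖ over symmetric difference tends to 0
  have hlin : Tendsto (fun v => ∫⁻ q in symmDiff (A v) (A v₀), ‖D q‖₊ ∂volume)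
      (nhds v₀) (nhds 0) :=
    tendsto_setLIntegral_zero hD.2.ne hmeas
  -- Step 3: bound the difference of the integrals
  have hbound : ∀ v, ‖(∫ q in A v, D q) - ∫ q in A v₀, D q‖ ≤
      (∫⁻ q in symmDiff (A v) (A v₀), ‖D q‖₊ ∂volume).toReal := by
    intro v
    have h1 : (∫ q in A v, D q) - ∫ q in A v₀, D q
        = ∫ q, ((A v).indicator D q - (A v₀).indicator D q) ∂volume := by
      rw [integral_sub (hD.integrableOn.integrable_indicator (hAm v))
        (hD.integrableOn.integrable_indicator (hAm v₀)),
        integral_indicator (hAm v), integral_indicator (hAm v₀)]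
    rw [h1]
    calc ‖∫ q, ((A v).indicator D q - (A v₀).indicator D q) ∂volume‖
        ≤ (∫⁻ q, ‖(A v).indicator D q - (A v₀).indicator D q‖₊ ∂volume).toReal := by
          simpa only [ofReal_norm_eq_enorm, enorm_eq_nnnorm] using
            norm_integral_le_lintegral_norm
              (fun q => (A v).indicator D q - (A v₀).indicator D q)
      _ = (∫⁻ q in symmDiff (A v) (A v₀), ‖D q‖₊ ∂volume).toReal := by
          congr 1
          rw [← lintegral_indicator ((hAm v).symmDiff (hAm v₀)) _]
          congr 1; funext q
          by_cases hv : q ∈ A v <;> by_cases hv0 : q ∈ A v₀ <;>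
            simp [Set.indicator, hv, hv0, Set.mem_symmDiff]
  -- Step 4: conclude
  have hto : Tendsto (fun v => (∫⁻ q in symmDiff (A v) (A v₀), ‖D q‖₊ ∂volume).toReal)
      (nhds v₀) (nhds 0) := by
    have := (ENNReal.tendsto_toReal (a := 0) (by simp)).comp hlin
    exact this
  have hsq : Tendsto (fun v => (∫ q in A v, D q) - ∫ q in A v₀, D q) (nhds v₀) (nhds 0) :=
    squeeze_zero_norm hbound hto
  have hfin := hsq.add ((tendsto_const_nhds : Tendsto _ (nhds v₀) (nhds (∫ q in A v₀, D q))))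
  have hCA : ContinuousAt (fun v => ∫ q in A v, D q) v₀ := by
    simpa [ContinuousAt, sub_add_cancel] using hfin
  exact hCA
end

section
/- Let Ω ⊆ ℝ² be a compact set and P_1, …, P_ρ ⊆ ℝ² nonempty compact sets whose topological frontiers are Lebesgue-negligible. Let u_1, …, u_ρ : ℝ² × ℝ² → ℝ be continuous functions, a_1, …, a_ρ ∈ ℝ, and D : ℝ² → ℝ a nonnegative integrable function. Assume that for every Q = (q_1, …, q_ρ) ∈ Γ and all i ≠ j the set {q ∈ Ω : a_i + u_i(q, q_i) = a_j + u_j(q, q_j)} is Lebesgue-negligible. Then for each i the map Q ↦ ∫_{Â_i(Q)} D(q) dq is continuous on Γ. -/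
open Set MeasureTheory Filter Topology Metric Pointwise

/-- continuity on `Γ` of the congestion term `Q ↦ ∫_{Â_i(Q)} D(q) dq`,
where `Γ` is the set of suitable solutions,
`Ω(Q) = Ω \ ⋃ j interior (q_j + P_j)` and
`Â_i(Q) = {q ∈ Ω(Q) | a_i + u_i(q, q_i) < a_j + u_j(q, q_j) for all j ≠ i}`. -/
theorem best_reply_measure_continuousOn
    (ρ : ℕ) (Ω : Set (EuclideanSpace ℝ (Fin 2))) (hΩ : IsCompact Ω)
    (P : Fin ρ → Set (EuclideanSpace ℝ (Fin 2)))
    (hPc : ∀ i, IsCompact (P i)) (hPne : ∀ i, (P i).Nonempty)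
    (hPfr : ∀ i, volume (frontier (P i)) = 0)
    (u : Fin ρ → EuclideanSpace ℝ (Fin 2) × EuclideanSpace ℝ (Fin 2) → ℝ)
    (hu : ∀ i, Continuous (u i))
    (a : Fin ρ → ℝ)
    (D : EuclideanSpace ℝ (Fin 2) → ℝ) (hD0 : ∀ q, 0 ≤ D q) (hD : Integrable D)
    (Γ : Set (Fin ρ → EuclideanSpace ℝ (Fin 2)))
    (hΓ : Γ = {Q | (∀ i, (fun p => Q i + p) '' P i ⊆ Ω) ∧
      ∀ i j, i ≠ j →
        interior ((fun p => Q i + p) '' P i) ∩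
          interior ((fun p => Q j + p) '' P j) = ∅})
    (hties : ∀ Q ∈ Γ, ∀ i j, i ≠ j →
      volume {q ∈ Ω | a i + u i (q, Q i) = a j + u j (q, Q j)} = 0)
    (Ahat : Fin ρ → (Fin ρ → EuclideanSpace ℝ (Fin 2)) →
      Set (EuclideanSpace ℝ (Fin 2)))
    (hAhat : ∀ i Q, Ahat i Q =
      {q ∈ Ω \ ⋃ j, interior ((fun p => Q j + p) '' P j) |
        ∀ j, j ≠ i → a i + u i (q, Q i) < a j + u j (q, Q j)}) :
    ∀ i, ContinuousOn (fun Q => ∫ q in Ahat i Q, D q) Γ := by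
  intro i
  -- measurability of the best-reply cell, for every profile
  have hΩmeas : MeasurableSet Ω := hΩ.isClosed.measurableSet
  have huq : ∀ (j : Fin ρ) (y : EuclideanSpace ℝ (Fin 2)),
      Continuous (fun q => a j + u j (q, y)) := fun j y =>
    continuous_const.add ((hu j).comp (continuous_id.prodMk continuous_const))
  have huy : ∀ (j : Fin ρ) (q : EuclideanSpace ℝ (Fin 2)),
      Continuous (fun y => a j + u j (q, y)) := fun j q =>
    continuous_const.add ((hu j).comp (continuous_const.prodMk continuous_id))
  have hAmeas : ∀ Q', MeasurableSet (Ahat i Q') := by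
    intro Q'
    rw [hAhat]
    have h1 : MeasurableSet (Ω \ ⋃ j, interior ((fun p => Q' j + p) '' P j)) :=
      hΩmeas.diff (MeasurableSet.iUnion fun j => isOpen_interior.measurableSet)
    have h2 : MeasurableSet {q : EuclideanSpace ℝ (Fin 2) |
        ∀ j, j ≠ i → a i + u i (q, Q' i) < a j + u j (q, Q' j)} := by
      have : {q : EuclideanSpace ℝ (Fin 2) |
          ∀ j, j ≠ i → a i + u i (q, Q' i) < a j + u j (q, Q' j)}
          = ⋂ j, ⋂ (_ : j ≠ i), {q | a i + u i (q, Q' i) < a j + u j (q, Q' j)} := by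
        ext q; simp
      rw [this]
      exact MeasurableSet.iInter fun j => MeasurableSet.iInter fun _ =>
        (isOpen_lt (huq i (Q' i)) (huq j (Q' j))).measurableSet
    exact h1.inter h2
  have hint : ∀ Q', ∫ q in Ahat i Q', D q = ∫ q, (Ahat i Q').indicator D q :=
    fun Q' => (integral_indicator (hAmeas Q')).symm
  intro Q hQ
  have hQΓ := hQ
  rw [hΓ] at hQΓ
  -- reduce to sequences
  rw [ContinuousWithinAt, tendsto_iff_seq_tendsto]
  intro Qn hQn
  have hconv : Tendsto Qn atTop (𝓝 Q) := hQn.mono_right nhdsWithin_le_nhds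
  have hcomp : ∀ j, Tendsto (fun n => Qn n j) atTop (𝓝 (Q j)) := by
    rw [tendsto_pi_nhds] at hconv; exact hconv
  -- the translated sets at the limit profile
  set S : Fin ρ → Set (EuclideanSpace ℝ (Fin 2)) :=
    fun j => (fun p => Q j + p) '' P j with hS
  have hScl : ∀ j, IsClosed (S j) := fun j =>
    ((hPc j).image (continuous_add_left (Q j))).isClosed
  have hSne : ∀ j, (S j).Nonempty := fun j => (hPne j).image _
  -- the a.e. good set
  have hfr : ∀ j, volume (frontier (S j)) = 0 := by
    intro j
    have h1 : S j = (Homeomorph.addLeft (Q j)) '' P j := rfl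
    rw [h1, ← Homeomorph.image_frontier]
    have h2 : (Homeomorph.addLeft (Q j)) '' frontier (P j) = Q j +ᵥ frontier (P j) := rfl
    rw [h2, measure_vadd, hPfr j]
  have hae1 : ∀ᵐ q, ∀ j, q ∉ frontier (S j) := by
    rw [ae_all_iff]
    intro j
    exact (measure_eq_zero_iff_ae_notMem).mp (hfr j)
  have hae2 : ∀ᵐ q, ∀ j, j ≠ i →
      ¬(q ∈ Ω ∧ a i + u i (q, Q i) = a j + u j (q, Q j)) := by
    rw [ae_all_iff]
    intro j
    by_cases hji : j = i
    · exact Eventually.of_forall fun q h => absurd hji h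
    · have := hties Q hQ i j (Ne.symm hji)
      have h0 : ∀ᵐ q, q ∉ {q ∈ Ω | a i + u i (q, Q i) = a j + u j (q, Q j)} :=
        (measure_eq_zero_iff_ae_notMem).mp this
      filter_upwards [h0] with q hq _ hmem
      exact hq hmem
  -- pointwise convergence of indicators
  have hptw : ∀ᵐ q, Tendsto (fun n => (Ahat i (Qn n)).indicator D q) atTop
      (𝓝 ((Ahat i Q).indicator D q)) := by
    filter_upwards [hae1, hae2] with q hq1 hq2
    suffices h : ∀ᶠ n in atTop, (Ahat i (Qn n)).indicator D q = (Ahat i Q).indicator D q by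
      exact Tendsto.congr' (EventuallyEq.symm h) tendsto_const_nhds
    by_cases hmem : q ∈ Ahat i Q
    · -- q is in the limit cell: eventually in the cells along the sequence
      rw [hAhat] at hmem
      obtain ⟨⟨hqΩ, hqnotint⟩, hqlt⟩ := hmem
      have hnot : ∀ j, q ∉ S j := by
        intro j hjq
        by_cases hin : q ∈ interior (S j)
        · exact hqnotint (mem_iUnion.2 ⟨j, hin⟩)
        · exact hq1 j ⟨subset_closure hjq, hin⟩
      have hev1 : ∀ j, ∀ᶠ n in atTop,
          q ∉ interior ((fun p => Qn n j + p) '' P j) := by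
        intro j
        have hpos : 0 < infDist q (S j) :=
          ((hScl j).notMem_iff_infDist_pos (hSne j)).mp (hnot j)
        have hd : ∀ᶠ n in atTop, dist (Qn n j) (Q j) < infDist q (S j) :=
          (tendsto_iff_dist_tendsto_zero.mp (hcomp j)).eventually_lt_const hpos
        filter_upwards [hd] with n hn hqint
        have hqin : q ∈ (fun p => Qn n j + p) '' P j := interior_subset hqint
        obtain ⟨p, hp, hple⟩ := hqin
        have h1 : infDist q (S j) ≤ dist q (Q j + p) :=
          infDist_le_dist_of_mem ⟨p, hp, rfl⟩
        have h2 : dist q (Q j + p) = dist (Qn n j) (Q j) := by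
          rw [← hple, dist_add_right]
        rw [h2] at h1
        exact absurd (lt_of_le_of_lt h1 hn) (lt_irrefl _)
      have hev2 : ∀ j, j ≠ i → ∀ᶠ n in atTop,
          a i + u i (q, Qn n i) < a j + u j (q, Qn n j) := by
        intro j hji
        have hti : Tendsto (fun n => a i + u i (q, Qn n i)) atTop
            (𝓝 (a i + u i (q, Q i))) :=
          ((huy i q).continuousAt.tendsto).comp (hcomp i)
        have htj : Tendsto (fun n => a j + u j (q, Qn n j)) atTop
            (𝓝 (a j + u j (q, Q j))) :=
          ((huy j q).continuousAt.tendsto).comp (hcomp j)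
        exact hti.eventually_lt htj (hqlt j hji)
      have hall : ∀ᶠ n in atTop, (∀ j, q ∉ interior ((fun p => Qn n j + p) '' P j)) ∧
          ∀ j, j ≠ i → a i + u i (q, Qn n i) < a j + u j (q, Qn n j) := by
        refine ((eventually_all).mpr hev1).and ((eventually_all).mpr ?_)
        intro j
        by_cases hji : j = i
        · exact Eventually.of_forall fun n h => absurd hji h
        · filter_upwards [hev2 j hji] with n hn _
          exact hn
      filter_upwards [hall] with n hn
      have hqmem : q ∈ Ahat i (Qn n) := by
        rw [hAhat]
        exact ⟨⟨hqΩ, fun hx => by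
          obtain ⟨t, ⟨j, rfl⟩, ht⟩ := hx
          exact hn.1 j ht⟩, hn.2⟩
      rw [indicator_of_mem hqmem, indicator_of_mem]
      rw [hAhat]
      exact ⟨⟨hqΩ, hqnotint⟩, hqlt⟩
    · -- q is outside the limit cell: eventually outside the cells along the sequence
      have hout : ∀ᶠ n in atTop, q ∉ Ahat i (Qn n) := by
        by_cases hqΩ : q ∈ Ω
        · by_cases hqint : q ∈ ⋃ j, interior (S j)
          · -- q in the interior of some translated obstacle
            obtain ⟨t, ⟨j, rfl⟩, hj⟩ := hqint
            obtain ⟨ε, hε, hball⟩ := Metric.isOpen_iff.mp isOpen_interior q hj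
            have hd : ∀ᶠ n in atTop, dist (Qn n j) (Q j) < ε :=
              (tendsto_iff_dist_tendsto_zero.mp (hcomp j)).eventually_lt_const hε
            filter_upwards [hd] with n hn hqA
            rw [hAhat] at hqA
            apply hqA.1.2
            refine mem_iUnion.2 ⟨j, ?_⟩
            -- q - (Qn n j - Q j) ∈ interior (S j), translate
            set w : EuclideanSpace ℝ (Fin 2) := Qn n j - Q j with hw
            have hqw : q - w ∈ interior (S j) := by
              apply hball
              rw [Metric.mem_ball]
              have : dist (q - w) q = ‖w‖ := by
                simp [dist_eq_norm]
              rw [this, hw]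
              simpa [dist_eq_norm] using hn
            have hwS : (fun p => Qn n j + p) '' P j = (fun x => w + x) '' S j := by
              rw [hS, ← Set.image_comp]
              apply Set.image_congr'
              intro x
              simp only [Function.comp_apply, hw]
              abel
            rw [hwS]
            have hopen : IsOpen ((fun x => w + x) '' interior (S j)) := by
              have : (fun x => w + x) '' interior (S j)
                  = (Homeomorph.addLeft w) '' interior (S j) := rfl
              rw [this, Homeomorph.isOpen_image]
              exact isOpen_interior
            have hsub : (fun x => w + x) '' interior (S j) ⊆ (fun x => w + x) '' S j :=
              Set.image_mono interior_subset
            apply interior_maximal hsub hopen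
            exact ⟨q - w, hqw, by show w + (q - w) = q; rw [add_comm, sub_add_cancel]⟩
          · -- some inequality fails strictly in the limit
            have : ∃ j, j ≠ i ∧ ¬(a i + u i (q, Q i) < a j + u j (q, Q j)) := by
              by_contra hcon
              push_neg at hcon
              apply hmem
              rw [hAhat]
              exact ⟨⟨hqΩ, fun hx => hqint hx⟩, hcon⟩
            obtain ⟨j, hji, hge⟩ := this
            have hne : a i + u i (q, Q i) ≠ a j + u j (q, Q j) := by
              intro heq
              exact hq2 j hji ⟨hqΩ, heq⟩
            have hgt : a j + u j (q, Q j) < a i + u i (q, Q i) :=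
              lt_of_le_of_ne (not_lt.mp hge) (Ne.symm hne)
            have hti : Tendsto (fun n => a i + u i (q, Qn n i)) atTop
                (𝓝 (a i + u i (q, Q i))) :=
              ((huy i q).continuousAt.tendsto).comp (hcomp i)
            have htj : Tendsto (fun n => a j + u j (q, Qn n j)) atTop
                (𝓝 (a j + u j (q, Q j))) :=
              ((huy j q).continuousAt.tendsto).comp (hcomp j)
            filter_upwards [htj.eventually_lt hti hgt] with n hn hqA
            rw [hAhat] at hqA
            exact absurd (hqA.2 j hji) (not_lt.mpr hn.le)
        · -- q not in Ω
          apply Eventually.of_forall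
          intro n hqA
          rw [hAhat] at hqA
          exact hqΩ hqA.1.1
      filter_upwards [hout] with n hn
      rw [indicator_of_notMem hn, indicator_of_notMem hmem]
  -- dominated convergence
  simp only [hint]
  apply tendsto_integral_of_dominated_convergence D
    (fun n => (hD.aestronglyMeasurable.indicator (hAmeas (Qn n))))
    hD
  · intro n
    apply Eventually.of_forall
    intro q
    by_cases hq : q ∈ Ahat i (Qn n)
    · rw [indicator_of_mem hq, Real.norm_eq_abs, abs_of_nonneg (hD0 q)]
    · rw [indicator_of_notMem hq, norm_zero]
      exact hD0 q
  · exact hptw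
end

section
/- Let Ω ⊆ ℝ² be a compact set and P_1, …, P_ρ ⊆ ℝ² nonempty compact sets whose topological frontiers are Lebesgue-negligible. Let u_1, …, u_ρ : ℝ² × ℝ² → ℝ be continuous functions, a_1, …, a_ρ ∈ ℝ, and D, B : ℝ² → ℝ nonnegative integrable functions. Assume that for every Q = (q_1, …, q_ρ) ∈ Γ and all i ≠ j the set {q ∈ Ω : a_i + u_i(q, q_i) = a_j + u_j(q, q_j)} is Lebesgue-negligible, and assume Γ ≠ ∅. Let I_1, …, I_ρ, C_1, …, C_ρ, L : ℝ → ℝ be continuous functions. Define F(Q) = ∑_{i=1}^ρ [ I_i(∫_{q_i + P_i} B(q) dq) + C_i(∫_{Â_i(Q)} D(q) dq) ] + L(∫_{(q_1 + P_1) ∪ … ∪ (q_ρ + P_ρ)} D(q) dq). Then there exists Q* ∈ Γ such that F(Q*) ≤ F(Q) for all Q ∈ Γ, i.e., the bilevel location-allocation problem BL admits an optimal solution. -/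
open Set MeasureTheory Filter

section Aux

variable {E : Type*} [NormedAddCommGroup E]

lemma aux_mem_transl {q x : E} {S : Set E} :
    x ∈ (fun p => q + p) '' S ↔ -q + x ∈ S := by
  rw [Set.image_add_left]; rfl

lemma aux_interior_transl (q : E) (S : Set E) :
    interior ((fun p => q + p) '' S) = (fun p => q + p) '' interior S :=
  ((Homeomorph.addLeft q).image_interior S).symm

lemma aux_eventually_mem {qn : ℕ → E} {q : E} (h : Tendsto qn atTop (nhds q))
    {S : Set E} (hS : IsOpen S) {x : E} (hx : -q + x ∈ S) :
    ∀ᶠ n in atTop, -qn n + x ∈ S := by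
  have ht : Tendsto (fun n => -qn n + x) atTop (nhds (-q + x)) :=
    (h.neg).add_const x
  exact ht (hS.mem_nhds hx)

end Aux

abbrev E2 : Type := EuclideanSpace ℝ (Fin 2)

/-- existence of an optimal solution of the bilevel location-allocation
problem BL. With `Γ` the (nonempty) set of suitable solutions,
`Â_i(Q)` the best-reply cells, and
`F(Q) = ∑ i [I_i(∫_{q_i+P_i} B) + C_i(∫_{Â_i(Q)} D)] + L(∫_{⋃ i (q_i+P_i)} D)`,
there exists `Q* ∈ Γ` with `F(Q*) ≤ F(Q)` for all `Q ∈ Γ`. -/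
theorem bilevel_problem_has_optimal_solution
    (ρ : ℕ) (Ω : Set (EuclideanSpace ℝ (Fin 2))) (hΩ : IsCompact Ω)
    (P : Fin ρ → Set (EuclideanSpace ℝ (Fin 2)))
    (hPc : ∀ i, IsCompact (P i)) (hPne : ∀ i, (P i).Nonempty)
    (hPfr : ∀ i, volume (frontier (P i)) = 0)
    (u : Fin ρ → EuclideanSpace ℝ (Fin 2) × EuclideanSpace ℝ (Fin 2) → ℝ)
    (hu : ∀ i, Continuous (u i))
    (a : Fin ρ → ℝ)
    (D B : EuclideanSpace ℝ (Fin 2) → ℝ)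
    (hD0 : ∀ q, 0 ≤ D q) (hD : Integrable D)
    (hB0 : ∀ q, 0 ≤ B q) (hB : Integrable B)
    (Γ : Set (Fin ρ → EuclideanSpace ℝ (Fin 2)))
    (hΓ : Γ = {Q | (∀ i, (fun p => Q i + p) '' P i ⊆ Ω) ∧
      ∀ i j, i ≠ j →
        interior ((fun p => Q i + p) '' P i) ∩
          interior ((fun p => Q j + p) '' P j) = ∅})
    (hΓne : Γ.Nonempty)
    (hties : ∀ Q ∈ Γ, ∀ i j, i ≠ j →
      volume {q ∈ Ω | a i + u i (q, Q i) = a j + u j (q, Q j)} = 0)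
    (Ahat : Fin ρ → (Fin ρ → EuclideanSpace ℝ (Fin 2)) →
      Set (EuclideanSpace ℝ (Fin 2)))
    (hAhat : ∀ i Q, Ahat i Q =
      {q ∈ Ω \ ⋃ j, interior ((fun p => Q j + p) '' P j) |
        ∀ j, j ≠ i → a i + u i (q, Q i) < a j + u j (q, Q j)})
    (I C : Fin ρ → ℝ → ℝ) (L : ℝ → ℝ)
    (hI : ∀ i, Continuous (I i)) (hC : ∀ i, Continuous (C i)) (hL : Continuous L)
    (F : (Fin ρ → EuclideanSpace ℝ (Fin 2)) → ℝ)
    (hF : ∀ Q, F Q =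
      (∑ i, (I i (∫ q in (fun p => Q i + p) '' P i, B q) +
             C i (∫ q in Ahat i Q, D q))) +
      L (∫ q in ⋃ i, (fun p => Q i + p) '' P i, D q)) :
    ∃ Qstar ∈ Γ, ∀ Q ∈ Γ, F Qstar ≤ F Q := by
  classical
  -- translated sets are compact, hence measurable
  have htc : ∀ (q : E2) (i : Fin ρ), IsCompact ((fun p => q + p) '' P i) :=
    fun q i => (hPc i).image (Continuous.add continuous_const continuous_id : Continuous fun p : E2 => q + p)
  have htm : ∀ (q : E2) (i : Fin ρ), MeasurableSet ((fun p => q + p) '' P i) :=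
    fun q i => (htc q i).isClosed.measurableSet
  -- volume of a translated set
  have hvol : ∀ (q : E2) (S : Set E2), volume ((fun p => q + p) '' S) = volume S := by
    intro q S
    rw [Set.image_add_left]
    exact measure_preimage_add _ _ _
  -- membership in interior of a translate
  have hmemint : ∀ (q x : E2) (S : Set E2),
      x ∈ interior ((fun p => q + p) '' S) ↔ -q + x ∈ interior S := by
    intro q x S
    rw [aux_interior_transl, aux_mem_transl]
  -- membership in Ahat
  have memA : ∀ (i : Fin ρ) (Q' : Fin ρ → E2) (x : E2),
      x ∈ Ahat i Q' ↔ x ∈ Ω ∧ (∀ j, -Q' j + x ∉ interior (P j)) ∧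
        ∀ j, j ≠ i → a i + u i (x, Q' i) < a j + u j (x, Q' j) := by
    intro i Q' x
    rw [hAhat]
    simp only [Set.mem_setOf_eq, Set.mem_diff, Set.mem_iUnion, not_exists, hmemint]
    tauto
  -- Ahat is measurable
  have hmeasA : ∀ (i : Fin ρ) (Q' : Fin ρ → E2), MeasurableSet (Ahat i Q') := by
    intro i Q'
    have heq : Ahat i Q' =
        (Ω \ ⋃ j, interior ((fun p => Q' j + p) '' P j)) ∩
        ⋂ j, ⋂ (_ : j ≠ i), {q : E2 | a i + u i (q, Q' i) < a j + u j (q, Q' j)} := by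
      rw [hAhat]
      ext q
      simp only [Set.mem_setOf_eq, Set.mem_inter_iff, Set.mem_iInter]
    rw [heq]
    refine ((hΩ.isClosed.measurableSet.diff
      (MeasurableSet.iUnion fun j => isOpen_interior.measurableSet)).inter
      (MeasurableSet.iInter fun j => MeasurableSet.iInter fun _ =>
        (isOpen_lt ?_ ?_).measurableSet))
    · exact continuous_const.add ((hu i).comp (continuous_id.prodMk continuous_const))
    · exact continuous_const.add ((hu j).comp (continuous_id.prodMk continuous_const))
  -- Γ is compact
  have hΓc : IsCompact Γ := by
    choose p0 hp0 using hPne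
    have hKc : ∀ i, IsCompact ((fun q : E2 => q + p0 i) ⁻¹' Ω) := fun i =>
      (Homeomorph.addRight (p0 i)).isCompact_preimage.mpr hΩ
    have hsub : Γ ⊆ Set.univ.pi (fun i => (fun q : E2 => q + p0 i) ⁻¹' Ω) := by
      intro Q hQ i _
      have h1 := (hΓ ▸ hQ).1 i
      exact h1 ⟨p0 i, hp0 i, rfl⟩
    have hclosed : IsClosed Γ := by
      rw [hΓ]
      have hA : IsClosed {Q : Fin ρ → E2 | ∀ i, (fun p => Q i + p) '' P i ⊆ Ω} := by
        have : {Q : Fin ρ → E2 | ∀ i, (fun p => Q i + p) '' P i ⊆ Ω}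
            = ⋂ i, ⋂ p ∈ P i, {Q : Fin ρ → E2 | Q i + p ∈ Ω} := by
          ext Q
          simp only [Set.mem_setOf_eq, Set.mem_iInter, Set.subset_def,
            aux_mem_transl]
          constructor
          · intro h i p hp
            exact h i (Q i + p) (by simpa using hp)
          · intro h i x hx
            simpa using h i (-Q i + x) hx
        rw [this]
        exact isClosed_iInter fun i => isClosed_iInter fun p => isClosed_iInter fun _ =>
          IsClosed.preimage ((continuous_apply i).add continuous_const) hΩ.isClosed
      have hBcl : IsClosed {Q : Fin ρ → E2 | ∀ i j, i ≠ j →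
          interior ((fun p => Q i + p) '' P i) ∩
            interior ((fun p => Q j + p) '' P j) = ∅} := by
        have : {Q : Fin ρ → E2 | ∀ i j, i ≠ j →
            interior ((fun p => Q i + p) '' P i) ∩
              interior ((fun p => Q j + p) '' P j) = ∅}
            = ⋂ i, ⋂ j, {Q : Fin ρ → E2 | i ≠ j →
                interior ((fun p => Q i + p) '' P i) ∩
                  interior ((fun p => Q j + p) '' P j) = ∅} := by
          ext Q; simp only [Set.mem_setOf_eq, Set.mem_iInter]
        rw [this]
        refine isClosed_iInter fun i => isClosed_iInter fun j => ?_
        by_cases hij : i = j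
        · simp [hij]
        · have hset : {Q : Fin ρ → E2 | i ≠ j →
              interior ((fun p => Q i + p) '' P i) ∩
                interior ((fun p => Q j + p) '' P j) = ∅}
              = {Q : Fin ρ → E2 |
              interior ((fun p => Q i + p) '' P i) ∩
                interior ((fun p => Q j + p) '' P j) = ∅} := by
            ext Q; simp [hij]
          rw [hset]
          rw [← isOpen_compl_iff]
          rw [isOpen_iff_mem_nhds]
          intro Q hQ
          simp only [Set.mem_compl_iff, Set.mem_setOf_eq, ← Ne.eq_def,
            ← Set.nonempty_iff_ne_empty] at hQ
          obtain ⟨x, hx1, hx2⟩ := hQ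
          rw [hmemint] at hx1 hx2
          have hopen : IsOpen {Q' : Fin ρ → E2 |
              -Q' i + x ∈ interior (P i) ∧ -Q' j + x ∈ interior (P j)} := by
            have hc : ∀ k : Fin ρ, Continuous (fun Q' : Fin ρ → E2 => -Q' k + x) :=
              fun k => ((continuous_apply k).neg).add continuous_const
            exact IsOpen.inter (IsOpen.preimage (hc i) isOpen_interior)
              (IsOpen.preimage (hc j) isOpen_interior)
          refine Filter.mem_of_superset (hopen.mem_nhds ⟨hx1, hx2⟩) ?_
          rintro Q' ⟨h1, h2⟩
          simp only [Set.mem_compl_iff, Set.mem_setOf_eq, ← Ne.eq_def,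
            ← Set.nonempty_iff_ne_empty]
          exact ⟨x, (hmemint _ _ _).mpr h1, (hmemint _ _ _).mpr h2⟩
      exact hA.inter hBcl
    exact (isCompact_univ_pi hKc).of_isClosed_subset hclosed hsub
  -- Key: sequential continuity of F at points of Γ
  have key : ∀ Q ∈ Γ, ∀ Qn : ℕ → (Fin ρ → E2), Tendsto Qn atTop (nhds Q) →
      Tendsto (fun n => F (Qn n)) atTop (nhds (F Q)) := by
    intro Q hQ Qn hlim
    have hlim' : ∀ i, Tendsto (fun n => Qn n i) atTop (nhds (Q i)) :=
      tendsto_pi_nhds.mp hlim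
    -- the negligible set of "bad" points
    set N : Set E2 := (⋃ j, (fun p => Q j + p) '' frontier (P j)) ∪
      ⋃ i, ⋃ j, ⋃ (_ : i ≠ j), {q ∈ Ω | a i + u i (q, Q i) = a j + u j (q, Q j)}
      with hNdef
    have hN : volume N = 0 := by
      refine measure_union_null (measure_iUnion_null fun j => ?_)
        (measure_iUnion_null fun i => measure_iUnion_null fun j =>
          measure_iUnion_null fun hij => hties Q hQ i j hij)
      rw [hvol]; exact hPfr j
    have haeN : ∀ᵐ x : E2, x ∉ N := measure_eq_zero_iff_ae_notMem.mp hN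
    -- frontier characterization consequences for x ∉ N
    have hfr : ∀ (x : E2) (j : Fin ρ), x ∉ N → -Q j + x ∈ closure (P j) →
        -Q j + x ∈ interior (P j) := by
      intro x j hxN hcl
      by_contra hint
      exact hxN (Set.mem_union_left _ (Set.mem_iUnion.mpr
        ⟨j, aux_mem_transl.mpr ⟨hcl, hint⟩⟩))
    -- convergence of the B-integrals over translated sets
    have hconv1 : ∀ i : Fin ρ,
        Tendsto (fun n => ∫ q in (fun p => Qn n i + p) '' P i, B q) atTop
          (nhds (∫ q in (fun p => Q i + p) '' P i, B q)) := by
      intro i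
      rw [← integral_indicator (htm (Q i) i)]
      refine Tendsto.congr (fun n => integral_indicator (htm (Qn n i) i)) ?_
      refine tendsto_integral_of_dominated_convergence (fun x => ‖B x‖)
        (fun n => hB.1.indicator (htm (Qn n i) i)) hB.norm
        (fun n => Eventually.of_forall fun x => norm_indicator_le_norm_self _ _) ?_
      refine haeN.mono fun x hxN => ?_
      refine Tendsto.congr' ?_ tendsto_const_nhds
      by_cases h1 : -Q i + x ∈ interior (P i)
      · have hev := aux_eventually_mem (hlim' i) isOpen_interior h1
        refine hev.mono fun n hn => ?_
        simp only [Set.indicator_of_mem (aux_mem_transl.mpr (interior_subset h1)),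
          Set.indicator_of_mem (aux_mem_transl.mpr (interior_subset hn))]
      · by_cases h2 : -Q i + x ∈ closure (P i)
        · exact absurd (hfr x i hxN h2) h1
        · have hev := aux_eventually_mem (hlim' i) isClosed_closure.isOpen_compl h2
          refine hev.mono fun n hn => ?_
          simp only [Set.indicator_of_notMem (fun hmem =>
              h2 (subset_closure (aux_mem_transl.mp hmem))),
            Set.indicator_of_notMem (fun hmem =>
              hn (subset_closure (aux_mem_transl.mp hmem)))]
    -- convergence of the D-integral over the union of translated sets
    have hUm : ∀ Q' : Fin ρ → E2,
        MeasurableSet (⋃ i, (fun p => Q' i + p) '' P i) :=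
      fun Q' => MeasurableSet.iUnion fun i => htm (Q' i) i
    have hconv2 : Tendsto (fun n => ∫ q in ⋃ i, (fun p => Qn n i + p) '' P i, D q)
        atTop (nhds (∫ q in ⋃ i, (fun p => Q i + p) '' P i, D q)) := by
      rw [← integral_indicator (hUm Q)]
      refine Tendsto.congr (fun n => integral_indicator (hUm (Qn n))) ?_
      refine tendsto_integral_of_dominated_convergence (fun x => ‖D x‖)
        (fun n => hD.1.indicator (hUm (Qn n))) hD.norm
        (fun n => Eventually.of_forall fun x => norm_indicator_le_norm_self _ _) ?_
      refine haeN.mono fun x hxN => ?_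
      refine Tendsto.congr' ?_ tendsto_const_nhds
      by_cases h1 : ∃ j, -Q j + x ∈ interior (P j)
      · obtain ⟨j, hj⟩ := h1
        have hev := aux_eventually_mem (hlim' j) isOpen_interior hj
        refine hev.mono fun n hn => ?_
        have hx1 : x ∈ ⋃ k, (fun p => Q k + p) '' P k :=
          Set.mem_iUnion.mpr ⟨j, aux_mem_transl.mpr (interior_subset hj)⟩
        have hx2 : x ∈ ⋃ k, (fun p => Qn n k + p) '' P k :=
          Set.mem_iUnion.mpr ⟨j, aux_mem_transl.mpr (interior_subset hn)⟩
        simp only [Set.indicator_of_mem hx1, Set.indicator_of_mem hx2]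
      · push_neg at h1
        by_cases h2 : ∃ j, -Q j + x ∈ closure (P j)
        · obtain ⟨j, hj⟩ := h2
          exact absurd (hfr x j hxN hj) (h1 j)
        · push_neg at h2
          have hev : ∀ᶠ n in atTop, ∀ j, -Qn n j + x ∈ (closure (P j))ᶜ :=
            eventually_all.mpr fun j =>
              aux_eventually_mem (hlim' j) isClosed_closure.isOpen_compl (h2 j)
          refine hev.mono fun n hn => ?_
          have hx1 : x ∉ ⋃ k, (fun p => Q k + p) '' P k := by
            intro hmem
            obtain ⟨j, hj⟩ := Set.mem_iUnion.mp hmem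
            exact h2 j (subset_closure (aux_mem_transl.mp hj))
          have hx2 : x ∉ ⋃ k, (fun p => Qn n k + p) '' P k := by
            intro hmem
            obtain ⟨j, hj⟩ := Set.mem_iUnion.mp hmem
            exact hn j (subset_closure (aux_mem_transl.mp hj))
          simp only [Set.indicator_of_notMem hx1, Set.indicator_of_notMem hx2]
    -- convergence of the D-integrals over the best-reply cells
    have hconv3 : ∀ i : Fin ρ,
        Tendsto (fun n => ∫ q in Ahat i (Qn n), D q) atTop
          (nhds (∫ q in Ahat i Q, D q)) := by
      intro i
      rw [← integral_indicator (hmeasA i Q)]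
      refine Tendsto.congr (fun n => integral_indicator (hmeasA i (Qn n))) ?_
      refine tendsto_integral_of_dominated_convergence (fun x => ‖D x‖)
        (fun n => hD.1.indicator (hmeasA i (Qn n))) hD.norm
        (fun n => Eventually.of_forall fun x => norm_indicator_le_norm_self _ _) ?_
      refine haeN.mono fun x hxN => ?_
      refine Tendsto.congr' ?_ tendsto_const_nhds
      by_cases hxΩ : x ∈ Ω
      · by_cases h1 : ∃ j, -Q j + x ∈ interior (P j)
        · obtain ⟨j, hj⟩ := h1
          have hev := aux_eventually_mem (hlim' j) isOpen_interior hj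
          refine hev.mono fun n hn => ?_
          simp only [Set.indicator_of_notMem (fun hmem => ((memA i Q x).mp hmem).2.1 j hj),
            Set.indicator_of_notMem (fun hmem => ((memA i (Qn n) x).mp hmem).2.1 j hn)]
        · push_neg at h1
          by_cases h2 : ∃ j, -Q j + x ∈ closure (P j)
          · obtain ⟨j, hj⟩ := h2
            exact absurd (hfr x j hxN hj) (h1 j)
          · push_neg at h2
            have hev_int : ∀ᶠ n in atTop, ∀ j, -Qn n j + x ∈ (closure (P j))ᶜ :=
              eventually_all.mpr fun j =>
                aux_eventually_mem (hlim' j) isClosed_closure.isOpen_compl (h2 j)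
            -- no ties at x
            have hne : ∀ j, j ≠ i →
                a i + u i (x, Q i) ≠ a j + u j (x, Q j) := by
              intro j hj heq
              exact hxN (Set.mem_union_right _ (Set.mem_iUnion.mpr ⟨i,
                Set.mem_iUnion.mpr ⟨j, Set.mem_iUnion.mpr
                  ⟨hj.symm, ⟨hxΩ, heq⟩⟩⟩⟩))
            have htend : ∀ j : Fin ρ, Tendsto (fun n => a j + u j (x, Qn n j))
                atTop (nhds (a j + u j (x, Q j))) := by
              intro j
              exact tendsto_const_nhds.add (((hu j).tendsto _).comp
                (tendsto_const_nhds.prodMk_nhds (hlim' j)))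
            by_cases h3 : ∀ j, j ≠ i → a i + u i (x, Q i) < a j + u j (x, Q j)
            · -- x is in the limit cell and eventually in the cells
              have hxA : x ∈ Ahat i Q := (memA i Q x).mpr ⟨hxΩ, h1, h3⟩
              have hevlt : ∀ᶠ n in atTop, ∀ j, j ≠ i →
                  a i + u i (x, Qn n i) < a j + u j (x, Qn n j) := by
                refine eventually_all.mpr fun j => ?_
                by_cases hji : j = i
                · exact Eventually.of_forall fun n hji' => absurd hji hji'
                · exact ((htend i).eventually_lt (htend j) (h3 j hji)).mono
                    fun n hn _ => hn
              refine (hev_int.and hevlt).mono fun n ⟨hn1, hn2⟩ => ?_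
              have hxAn : x ∈ Ahat i (Qn n) := (memA i (Qn n) x).mpr
                ⟨hxΩ, fun j hint => hn1 j (interior_subset_closure hint), hn2⟩
              simp only [Set.indicator_of_mem hxAn, Set.indicator_of_mem hxA]
            · push_neg at h3
              obtain ⟨j, hji, hge⟩ := h3
              have hgt : a j + u j (x, Q j) < a i + u i (x, Q i) :=
                lt_of_le_of_ne hge (fun h => hne j hji h.symm)
              have hev := (htend j).eventually_lt (htend i) hgt
              refine hev.mono fun n hn => ?_
              simp only [Set.indicator_of_notMem (fun hmem =>
                  absurd (((memA i Q x).mp hmem).2.2 j hji) (not_lt.mpr hge)),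
                Set.indicator_of_notMem (fun hmem =>
                  absurd (((memA i (Qn n) x).mp hmem).2.2 j hji) (not_lt.mpr hn.le))]
      · refine Eventually.of_forall fun n => ?_
        simp only [Set.indicator_of_notMem (fun hmem => hxΩ ((memA i Q x).mp hmem).1),
          Set.indicator_of_notMem (fun hmem => hxΩ ((memA i (Qn n) x).mp hmem).1)]
    -- assemble
    rw [hF Q]
    refine Tendsto.congr (fun n => (hF (Qn n)).symm) ?_
    refine Tendsto.add ?_ (((hL).tendsto _).comp hconv2)
    refine tendsto_finset_sum _ fun i _ => Tendsto.add ?_ ?_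
    · exact ((hI i).tendsto _).comp (hconv1 i)
    · exact ((hC i).tendsto _).comp (hconv3 i)
  -- continuity of F on Γ, via sequences
  have hcont : ContinuousOn F Γ := by
    intro Q hQ
    rw [ContinuousWithinAt, tendsto_iff_seq_tendsto]
    intro Qn hQn
    have h1 : Tendsto Qn atTop (nhds Q) := hQn.mono_right nhdsWithin_le_nhds
    exact key Q hQ Qn h1
  obtain ⟨Qstar, hQstar, hmin⟩ := hΓc.exists_isMinOn hΓne hcont
  exact ⟨Qstar, hQstar, fun Q hQ => hmin hQ⟩
end

section
/- Let P ⊆ ℝ² be a compact set whose topological frontier is Lebesgue-negligible, and let B : ℝ² → ℝ be a nonnegative integrable function. For ε > 0 define the inner set P⁻(ε) = {q ∈ ℝ² : the closed ball of center q and radius ε is contained in P}. Then for every ξ > 0 there exists ε > 0 such that for every v ∈ ℝ², ∫_{(v + P) \ (v + P⁻(ε))} B(q) dq < ξ. -/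
open Set MeasureTheory
open scoped ENNReal NNReal

private lemma isClosed_innerCore {E : Type*} [NormedAddCommGroup E]
    {P : Set E} (hP : IsClosed P) (ε : ℝ) :
    IsClosed {q | Metric.closedBall q ε ⊆ P} := by
  refine IsSeqClosed.isClosed ?_
  intro qn q hqn hq x hx
  have hxn : ∀ n, qn n + (x - q) ∈ P := by
    intro n
    apply hqn n
    simp only [Metric.mem_closedBall, dist_eq_norm] at hx ⊢
    simpa using hx
  have : Filter.Tendsto (fun n => qn n + (x - q)) Filter.atTop (nhds (q + (x - q))) :=
    hq.add tendsto_const_nhds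
  have hmem := hP.mem_of_tendsto this (Filter.Eventually.of_forall hxn)
  simpa using hmem

/-- inner uniform approximation estimate. For a compact `P ⊆ ℝ²` with
Lebesgue-negligible frontier and a nonnegative integrable `B : ℝ² → ℝ`, with
`P⁻(ε) = {q | closedBall q ε ⊆ P}`, for every `ξ > 0` there is `ε > 0` such that for
every `v ∈ ℝ²`, `∫_{(v + P) \ (v + P⁻(ε))} B(q) dq < ξ`. -/
theorem inner_core_integral_small
    (P : Set (EuclideanSpace ℝ (Fin 2))) (hP : IsCompact P)
    (hfr : volume (frontier P) = 0)
    (B : EuclideanSpace ℝ (Fin 2) → ℝ) (hB0 : ∀ q, 0 ≤ B q) (hB : Integrable B) :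
    ∀ ξ : ℝ, 0 < ξ → ∃ ε : ℝ, 0 < ε ∧ ∀ v : EuclideanSpace ℝ (Fin 2),
      ∫ q in ((fun p => v + p) '' P) \
        ((fun p => v + p) '' {q | Metric.closedBall q ε ⊆ P}), B q < ξ := by
  intro ξ hξ
  -- total lintegral of B is finite
  have hlt : ∫⁻ x, ENNReal.ofReal (B x) ∂volume ≠ ∞ := by
    have := hB.2
    rw [HasFiniteIntegral] at this
    have heq : ∀ x, ‖B x‖ₑ = ENNReal.ofReal (B x) := fun x =>
      Real.enorm_eq_ofReal (hB0 x)
    simpa only [← heq] using this.ne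
  obtain ⟨δ, hδ0, hδ⟩ := exists_pos_setLIntegral_lt_of_measure_lt (μ := volume) hlt
    (ε := ENNReal.ofReal ξ) (by simp [hξ])
  -- the inner core sets
  set C : ℝ → Set (EuclideanSpace ℝ (Fin 2)) := fun ε => {q | Metric.closedBall q ε ⊆ P}
  set S : ℕ → Set (EuclideanSpace ℝ (Fin 2)) := fun n => P \ C (1 / (n + 1)) with hS
  have hPclosed : IsClosed P := hP.isClosed
  have hSmeas : ∀ n, NullMeasurableSet (S n) volume :=
    fun n => (hPclosed.measurableSet.diff
      (isClosed_innerCore hPclosed _).measurableSet).nullMeasurableSet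
  have hSanti : Antitone S := by
    intro m n hmn
    apply diff_subset_diff_right
    intro q hq x hx
    refine hq (Metric.closedBall_subset_closedBall ?_ hx)
    have hc : (m : ℝ) ≤ n := Nat.cast_le.mpr hmn
    apply one_div_le_one_div_of_le (by positivity)
    linarith
  have hSfin : ∃ n, volume (S n) ≠ ∞ := by
    refine ⟨0, ?_⟩
    exact ((measure_mono diff_subset).trans_lt hP.measure_lt_top).ne
  have hIcap : ⋂ n, S n ⊆ frontier P := by
    intro q hq
    simp only [mem_iInter, hS, mem_diff] at hq
    have hqP : q ∈ P := (hq 0).1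
    have hqint : q ∉ interior P := by
      intro hint
      obtain ⟨r, hr0, hr⟩ := Metric.isOpen_iff.1 isOpen_interior q hint
      obtain ⟨n, hn⟩ := exists_nat_one_div_lt (half_pos hr0)
      refine (hq n).2 ?_
      intro x hx
      have hxb : x ∈ Metric.ball q r := by
        simp only [Metric.mem_closedBall] at hx
        simp only [Metric.mem_ball]
        calc dist x q ≤ 1 / (n + 1) := hx
          _ < r / 2 := hn
          _ < r := half_lt_self hr0
      exact interior_subset (hr hxb)
    rw [hPclosed.frontier_eq]
    exact ⟨hqP, hqint⟩
  have htend : Filter.Tendsto (volume ∘ S) Filter.atTop (nhds (volume (⋂ n, S n))) :=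
    tendsto_measure_iInter_atTop hSmeas hSanti hSfin
  have hI0 : volume (⋂ n, S n) = 0 :=
    le_antisymm (le_trans (measure_mono hIcap) hfr.le) zero_le
  rw [hI0] at htend
  obtain ⟨n, hn⟩ := (Filter.Tendsto.eventually_lt_const hδ0 htend).exists
  refine ⟨1 / (n + 1), by positivity, fun v => ?_⟩
  have hinj : Function.Injective (fun p : EuclideanSpace ℝ (Fin 2) => v + p) :=
    fun a b h => by simpa using h
  have hsetdiff : ((fun p => v + p) '' P) \
      ((fun p => v + p) '' {q | Metric.closedBall q (1 / ((n : ℝ) + 1)) ⊆ P})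
      = (fun p => v + p) '' S n :=
    (Set.image_diff hinj P _).symm
  have himg : (fun p : EuclideanSpace ℝ (Fin 2) => v + p) '' S n
      = (fun p => -v + p) ⁻¹' S n := by
    ext x; constructor
    · rintro ⟨y, hy, rfl⟩; simpa using hy
    · intro hx; exact ⟨-v + x, hx, add_neg_cancel_left v x⟩
  have hvol : volume ((fun p : EuclideanSpace ℝ (Fin 2) => v + p) '' S n) < δ := by
    rw [himg, measure_preimage_add]
    exact hn
  have hkey := hδ _ hvol
  have heqint : ∫ q in (fun p => v + p) '' S n, B q
      = (∫⁻ x in (fun p => v + p) '' S n, ENNReal.ofReal (B x)).toReal :=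
    integral_eq_lintegral_of_nonneg_ae (Filter.Eventually.of_forall hB0)
      hB.aestronglyMeasurable.restrict
  rw [hsetdiff, heqint]
  exact ENNReal.toReal_lt_of_lt_ofReal hkey
end
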